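/- (Closed-form throughput, low-λ regime, single power level.) Assume 0 < λ < exp(−θ/ξ), so that h* = −(1/z₂)·ln λ − 1/γ_UD > 0, and define the boundary function g̃₀(x) = 0 for 0 ≤ x ≤ h* and g̃₀(x) = g₀(x) for x > h*. Then [∫₀^∞ ∫_{g̃₀(x)}^∞ p₁(x)·e^{−(x+y)} dy dx] / (1 + W·∫₀^∞ ∫_{g̃₀(x)}^∞ q₁(y)·e^{−(x+y)} dy dx) = (N₁ − N₂·λ^{1/z₂ + 1}) / (N₃ − N₄·λ^{1/z₂}). -/

import Mathlib

open Real MeasureTheory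

lemma expInt_integrable (a b c : ℝ) (hb : 0 < b) :
    MeasureTheory.IntegrableOn (fun y => Real.exp (c - b * y)) (Set.Ioi a) := by
  have h := (exp_neg_integrableOn_Ioi a hb).const_mul (Real.exp c)
  refine (MeasureTheory.integrableOn_congr_fun (fun y _ => ?_) measurableSet_Ioi).mpr h
  rw [← Real.exp_add]; ring_nf

lemma expInt (a b c : ℝ) (hb : 0 < b) :
    ∫ y in Set.Ioi a, Real.exp (c - b * y) = Real.exp (c - b * a) / b := by
  have hderiv : ∀ x ∈ Set.Ioi a, HasDerivAt (fun y => -Real.exp (c - b * y) / b)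
      (Real.exp (c - b * x)) x := by
    intro x _
    have h1 : HasDerivAt (fun y : ℝ => c - b * y) (-b) x := by
      simpa using ((hasDerivAt_id x).const_mul b).const_sub c
    have h2 := h1.exp
    have := (h2.neg).div_const b
    convert this using 1
    · rfl
    · rfl
    · rfl
    · rw [eq_div_iff hb.ne']; ring
  have hcont : ContinuousWithinAt (fun y => -Real.exp (c - b * y) / b) (Set.Ici a) a :=
    Continuous.continuousWithinAt (by continuity)
  have htend : Filter.Tendsto (fun y => -Real.exp (c - b * y) / b) Filter.atTop (nhds 0) := by
    have : Filter.Tendsto (fun y : ℝ => c - b * y) Filter.atTop Filter.atBot := by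
      apply Filter.tendsto_atBot_add_const_left
      exact (Filter.tendsto_neg_atBot_iff.mpr (Filter.tendsto_atTop_atTop_of_monotone
        (fun u v huv => by nlinarith) (fun r => ⟨r / b, by field_simp; exact le_rfl⟩)))
    have := (Real.tendsto_exp_atBot.comp this).neg.div_const b
    simpa using this
  have := MeasureTheory.integral_Ioi_of_hasDerivAt_of_tendsto hcont hderiv
    (expInt_integrable a b c hb) htend
  rw [this]; field_simp; ring

lemma splitIoi (f : ℝ → ℝ) (a b : ℝ) (hab : a ≤ b)
    (h1 : MeasureTheory.IntegrableOn f (Set.Ioc a b))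
    (h2 : MeasureTheory.IntegrableOn f (Set.Ioi b)) :
    ∫ x in Set.Ioi a, f x = (∫ x in Set.Ioc a b, f x) + ∫ x in Set.Ioi b, f x := by
  rw [← Set.Ioc_union_Ioi_eq_Ioi hab]
  exact MeasureTheory.setIntegral_union (Set.Ioc_disjoint_Ioi le_rfl) measurableSet_Ioi h1 h2

lemma expIntIoc (a b k c : ℝ) (hab : a ≤ b) (hk : 0 < k) :
    ∫ y in Set.Ioc a b, Real.exp (c - k * y)
      = Real.exp (c - k * a) / k - Real.exp (c - k * b) / k := by
  have hsplit := splitIoi (fun y => Real.exp (c - k * y)) a b hab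
    ((expInt_integrable a k c hk).mono_set Set.Ioc_subset_Ioi_self)
    (expInt_integrable b k c hk)
  rw [expInt a k c hk, expInt b k c hk] at hsplit
  linarith

set_option maxHeartbeats 2000000 in
theorem stmt19 (θ ρ ξ γSB γUD W lam : ℝ)
    (hθ : 0 < θ) (hρ : 0 < ρ) (hξ : 0 < ξ) (hγSB : 0 < γSB) (hγUD : 0 < γUD) (hW : 0 < W)
    (hlam0 : 0 < lam) (hlam : lam < Real.exp (-θ / ξ))
    (z₁ z₂ : ℝ) (hz₁ : z₁ = θ * γSB / ρ) (hz₂ : z₂ = θ * γUD / ξ)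
    (p₁ q₁ g₀ : ℝ → ℝ)
    (hp₁ : ∀ x : ℝ, p₁ x = Real.exp (-(θ * (γUD * x + 1)) / ξ))
    (hq₁ : ∀ y : ℝ, q₁ y = min (Real.exp (-(ρ * y - θ) / (θ * γSB))) 1)
    (hg₀ : ∀ x : ℝ, g₀ x = z₁ * z₂ * x + θ / ρ + z₁ * (θ / ξ + Real.log lam))
    (hstar : ℝ) (hhstar : hstar = -(1 / z₂) * Real.log lam - 1 / γUD)
    (g₀t : ℝ → ℝ) (hg₀t : ∀ x : ℝ, g₀t x = if x ≤ hstar then 0 else g₀ x)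
    (N₁ N₂ N₃ N₄ : ℝ)
    (hN₁ : N₁ = Real.exp (-θ / ξ) / (1 + z₂))
    (hN₂ : N₂ = (Real.exp (1 / γUD) / (1 + z₂)) *
      (1 - (1 + z₂) * Real.exp (-θ / ρ) / (1 + z₂ + z₁ * z₂)))
    (hN₃ : N₃ = 1 + W * (1 - Real.exp (-θ / ρ) / (1 + z₁)))
    (hN₄ : N₄ = W * Real.exp (1 / γUD) *
      (1 - (1 + z₂) * Real.exp (-θ / ρ) / (1 + z₂ + z₁ * z₂))) :
    (∫ x in Set.Ioi (0 : ℝ), ∫ y in Set.Ioi (g₀t x), p₁ x * Real.exp (-(x + y))) /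
        (1 + W * ∫ x in Set.Ioi (0 : ℝ), ∫ y in Set.Ioi (g₀t x),
          q₁ y * Real.exp (-(x + y))) =
      (N₁ - N₂ * lam ^ (1 / z₂ + 1)) / (N₃ - N₄ * lam ^ (1 / z₂)) := by
  have hz₁0 : 0 < z₁ := by rw [hz₁]; positivity
  have hz₂0 : 0 < z₂ := by rw [hz₂]; positivity
  have hA0 : (0:ℝ) < 1 + z₂ := by linarith
  have hB0 : (0:ℝ) < 1 + z₂ + z₁ * z₂ := by nlinarith
  have h1z₁ : (0:ℝ) < 1 + z₁ := by linarith
  have hkq : (0:ℝ) < 1 / z₁ + 1 := by positivity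
  set L : ℝ := Real.log lam with hLdef
  have hLlt : L < -θ / ξ := by
    have := Real.log_lt_log hlam0 hlam
    rwa [Real.log_exp] at this
  have hh0 : 0 < hstar := by
    rw [hhstar]
    have e1 : (1 / z₂) * (θ / ξ) = 1 / γUD := by rw [hz₂]; field_simp
    have e2 := mul_lt_mul_of_pos_left hLlt (one_div_pos.mpr hz₂0)
    have e3 : (1 / z₂) * (-θ / ξ) = -(1 / γUD) := by
      rw [← e1]; ring
    nlinarith [e2, e3]
  have hpow1 : lam ^ (1 / z₂ + 1) = Real.exp ((1 / z₂ + 1) * L) := by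
    rw [Real.rpow_def_of_pos hlam0, mul_comm]
  have hpow2 : lam ^ (1 / z₂) = Real.exp ((1 / z₂) * L) := by
    rw [Real.rpow_def_of_pos hlam0, mul_comm]
  have gkey : ∀ x : ℝ, g₀ x = θ / ρ + z₁ * z₂ * (x - hstar) := by
    intro x
    rw [hg₀, hhstar, hz₂]
    field_simp
    ring
  -- ============ NUMERATOR ============
  have innerN : ∀ x : ℝ, (∫ y in Set.Ioi (g₀t x), p₁ x * Real.exp (-(x + y)))
      = Real.exp ((-(θ * (γUD * x + 1)) / ξ - x) - 1 * (g₀t x)) := by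
    intro x
    have h1 : ∀ y ∈ Set.Ioi (g₀t x), p₁ x * Real.exp (-(x + y))
        = Real.exp ((-(θ * (γUD * x + 1)) / ξ - x) - 1 * y) := by
      intro y _
      rw [hp₁, ← Real.exp_add]
      ring_nf
    rw [MeasureTheory.setIntegral_congr_fun measurableSet_Ioi h1, expInt _ 1 _ one_pos]
    simp
  have numEq : (∫ x in Set.Ioi (0:ℝ), ∫ y in Set.Ioi (g₀t x), p₁ x * Real.exp (-(x + y)))
      = ∫ x in Set.Ioi (0:ℝ), (if x ≤ hstar then Real.exp ((-θ/ξ) - (1 + z₂) * x)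
          else Real.exp ((-θ/ξ - θ/ρ + z₁ * z₂ * hstar) - (1 + z₂ + z₁ * z₂) * x)) := by
    apply MeasureTheory.setIntegral_congr_fun measurableSet_Ioi
    intro x _
    show (∫ y in Set.Ioi (g₀t x), p₁ x * Real.exp (-(x + y)))
        = (if x ≤ hstar then Real.exp ((-θ/ξ) - (1 + z₂) * x)
          else Real.exp ((-θ/ξ - θ/ρ + z₁ * z₂ * hstar) - (1 + z₂ + z₁ * z₂) * x))
    rw [innerN x, hg₀t]
    by_cases hxh : x ≤ hstar
    · rw [if_pos hxh, if_pos hxh, Real.exp_eq_exp, hz₂]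
      field_simp
      ring
    · rw [if_neg hxh, if_neg hxh, gkey, Real.exp_eq_exp, hz₂]
      field_simp
      ring
  have hNum : (∫ x in Set.Ioi (0:ℝ), ∫ y in Set.Ioi (g₀t x), p₁ x * Real.exp (-(x + y)))
      = N₁ - N₂ * lam ^ (1 / z₂ + 1) := by
    rw [numEq]
    have int1 : MeasureTheory.IntegrableOn
        (fun x => if x ≤ hstar then Real.exp ((-θ/ξ) - (1 + z₂) * x)
          else Real.exp ((-θ/ξ - θ/ρ + z₁ * z₂ * hstar) - (1 + z₂ + z₁ * z₂) * x))
        (Set.Ioc 0 hstar) := by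
      refine (MeasureTheory.integrableOn_congr_fun (fun x hx => ?_) measurableSet_Ioc).mpr
        ((expInt_integrable 0 (1 + z₂) (-θ/ξ) hA0).mono_set Set.Ioc_subset_Ioi_self)
      rw [if_pos hx.2]
    have int2 : MeasureTheory.IntegrableOn
        (fun x => if x ≤ hstar then Real.exp ((-θ/ξ) - (1 + z₂) * x)
          else Real.exp ((-θ/ξ - θ/ρ + z₁ * z₂ * hstar) - (1 + z₂ + z₁ * z₂) * x))
        (Set.Ioi hstar) := by
      refine (MeasureTheory.integrableOn_congr_fun (fun x hx => ?_) measurableSet_Ioi).mpr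
        (expInt_integrable hstar (1 + z₂ + z₁ * z₂) (-θ/ξ - θ/ρ + z₁ * z₂ * hstar) hB0)
      rw [if_neg (not_le.mpr hx)]
    rw [splitIoi _ 0 hstar hh0.le int1 int2,
      MeasureTheory.setIntegral_congr_fun measurableSet_Ioc
        (fun x (hx : x ∈ Set.Ioc 0 hstar) => if_pos hx.2),
      MeasureTheory.setIntegral_congr_fun measurableSet_Ioi
        (fun x (hx : x ∈ Set.Ioi hstar) => if_neg (not_le.mpr hx)),
      expIntIoc 0 hstar (1 + z₂) (-θ/ξ) hh0.le hA0,
      expInt hstar (1 + z₂ + z₁ * z₂) _ hB0]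
    have eN1 : Real.exp ((-θ/ξ) - (1 + z₂) * hstar)
        = lam ^ (1 / z₂ + 1) * Real.exp (1 / γUD) := by
      rw [hpow1, ← Real.exp_add, Real.exp_eq_exp, hhstar, hz₂]
      field_simp
      ring
    have eN2 : Real.exp ((-θ/ξ - θ/ρ + z₁ * z₂ * hstar) - (1 + z₂ + z₁ * z₂) * hstar)
        = lam ^ (1 / z₂ + 1) * Real.exp (1 / γUD) * Real.exp (-θ/ρ) := by
      rw [hpow1, ← Real.exp_add, ← Real.exp_add, Real.exp_eq_exp, hhstar, hz₂]
      field_simp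
      ring
    rw [eN1, eN2, hN₁, hN₂]
    rw [show ((-θ/ξ) - (1 + z₂) * 0) = -θ/ξ by ring]
    have hAne : (1 + z₂) ≠ 0 := ne_of_gt hA0
    have hBne : (1 + z₂ + z₁ * z₂) ≠ 0 := ne_of_gt hB0
    generalize Real.exp (-θ/ξ) = E1
    generalize Real.exp (1/γUD) = E2
    generalize Real.exp (-θ/ρ) = E3
    generalize lam ^ (1/z₂ + 1) = P
    field_simp
    ring
  -- ============ DENOMINATOR ============
  have hq2 : ∀ y : ℝ, θ/ρ ≤ y → q₁ y * Real.exp (-y)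
      = Real.exp ((1/γSB) - (1/z₁ + 1) * y) := by
    intro y hy
    have hθρ : θ ≤ ρ * y := by
      have := (div_le_iff₀ hρ).mp hy
      nlinarith
    have hle : Real.exp (-(ρ * y - θ) / (θ * γSB)) ≤ 1 := by
      apply Real.exp_le_one_iff.mpr
      apply div_nonpos_of_nonpos_of_nonneg
      · linarith
      · positivity
    rw [hq₁, min_eq_left hle, ← Real.exp_add, Real.exp_eq_exp, hz₁]
    field_simp
    ring
  have hq1e : ∀ y ∈ Set.Ioc (0:ℝ) (θ/ρ), q₁ y * Real.exp (-y) = Real.exp (0 - 1 * y) := by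
    intro y hy
    have hθρ : ρ * y ≤ θ := by
      have := (le_div_iff₀ hρ).mp hy.2
      nlinarith
    have h1 : (1:ℝ) ≤ Real.exp (-(ρ * y - θ) / (θ * γSB)) := by
      apply Real.one_le_exp
      apply div_nonneg
      · linarith
      · positivity
    rw [hq₁, min_eq_right h1, one_mul]
    congr 1
    ring
  have Q0 : (∫ y in Set.Ioi (0:ℝ), q₁ y * Real.exp (-y))
      = 1 - Real.exp (-θ/ρ) / (1 + z₁) := by
    have int1 : MeasureTheory.IntegrableOn (fun y => q₁ y * Real.exp (-y))
        (Set.Ioc 0 (θ/ρ)) :=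
      (MeasureTheory.integrableOn_congr_fun hq1e measurableSet_Ioc).mpr
        ((expInt_integrable 0 1 0 one_pos).mono_set Set.Ioc_subset_Ioi_self)
    have int2 : MeasureTheory.IntegrableOn (fun y => q₁ y * Real.exp (-y))
        (Set.Ioi (θ/ρ)) :=
      (MeasureTheory.integrableOn_congr_fun
        (fun y (hy : y ∈ Set.Ioi (θ/ρ)) => hq2 y (le_of_lt hy)) measurableSet_Ioi).mpr
        (expInt_integrable _ _ _ hkq)
    rw [splitIoi _ 0 (θ/ρ) (by positivity) int1 int2,
      MeasureTheory.setIntegral_congr_fun measurableSet_Ioc hq1e,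
      MeasureTheory.setIntegral_congr_fun measurableSet_Ioi
        (fun y (hy : y ∈ Set.Ioi (θ/ρ)) => hq2 y (le_of_lt hy)),
      expIntIoc 0 (θ/ρ) 1 0 (by positivity) one_pos, expInt _ _ _ hkq]
    have e1 : Real.exp (1/γSB - (1/z₁ + 1) * (θ/ρ)) = Real.exp (-θ/ρ) := by
      rw [Real.exp_eq_exp, hz₁]
      field_simp
      ring
    have e2 : Real.exp (0 - 1 * (θ/ρ)) = Real.exp (-θ/ρ) := by rw [Real.exp_eq_exp]; ring
    rw [e1, e2]
    rw [show ((0:ℝ) - 1 * 0) = 0 by ring, Real.exp_zero]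
    field_simp
    ring
  have innerQ : ∀ x ∈ Set.Ioi (0:ℝ), (∫ y in Set.Ioi (g₀t x), q₁ y * Real.exp (-(x + y)))
      = (if x ≤ hstar then Real.exp (0 - 1 * x) * (1 - Real.exp (-θ/ρ) / (1 + z₁))
          else Real.exp ((1/γSB - (1/z₁ + 1) * (θ/ρ - z₁ * z₂ * hstar))
            - (1 + z₂ + z₁ * z₂) * x) * (z₁ / (1 + z₁))) := by
    intro x _
    by_cases hxh : x ≤ hstar
    · rw [if_pos hxh, hg₀t, if_pos hxh]
      have h1 : ∀ y ∈ Set.Ioi (0:ℝ), q₁ y * Real.exp (-(x + y))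
          = Real.exp (-x) * (q₁ y * Real.exp (-y)) := by
        intro y _
        rw [show -(x + y) = -x + -y by ring, Real.exp_add]
        ring
      rw [MeasureTheory.setIntegral_congr_fun measurableSet_Ioi h1,
        MeasureTheory.integral_const_mul, Q0]
      congr 1
      rw [Real.exp_eq_exp]
      ring
    · rw [if_neg hxh, hg₀t, if_neg hxh]
      have hgx : θ/ρ ≤ g₀ x := by
        rw [gkey]
        nlinarith [mul_pos (mul_pos hz₁0 hz₂0) (sub_pos.mpr (not_le.mp hxh))]
      have h1 : ∀ y ∈ Set.Ioi (g₀ x), q₁ y * Real.exp (-(x + y))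
          = Real.exp ((1/γSB - x) - (1/z₁ + 1) * y) := by
        intro y hy
        have hy' : θ/ρ ≤ y := le_trans hgx (le_of_lt hy)
        have := hq2 y hy'
        calc q₁ y * Real.exp (-(x + y))
            = Real.exp (-x) * (q₁ y * Real.exp (-y)) := by
              rw [show -(x + y) = -x + -y by ring, Real.exp_add]; ring
          _ = Real.exp (-x) * Real.exp ((1/γSB) - (1/z₁ + 1) * y) := by rw [this]
          _ = Real.exp ((1/γSB - x) - (1/z₁ + 1) * y) := by
              rw [← Real.exp_add]; ring_nf
      rw [MeasureTheory.setIntegral_congr_fun measurableSet_Ioi h1, expInt _ _ _ hkq]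
      rw [gkey, div_eq_mul_one_div, show (1:ℝ) / (1/z₁ + 1) = z₁ / (1 + z₁) by
        field_simp]
      congr 1
      rw [Real.exp_eq_exp]
      field_simp
      ring
  have hDen : (∫ x in Set.Ioi (0:ℝ), ∫ y in Set.Ioi (g₀t x), q₁ y * Real.exp (-(x + y)))
      = (1 - Real.exp (-θ/ρ) / (1 + z₁)) * (1 - lam ^ (1/z₂) * Real.exp (1/γUD))
        + lam ^ (1/z₂) * Real.exp (1/γUD) * Real.exp (-θ/ρ)
          * (z₁ / ((1 + z₁) * (1 + z₂ + z₁ * z₂))) := by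
    rw [MeasureTheory.setIntegral_congr_fun measurableSet_Ioi (fun x hx => innerQ x hx)]
    have int1 : MeasureTheory.IntegrableOn
        (fun x => (if x ≤ hstar then Real.exp (0 - 1 * x) * (1 - Real.exp (-θ/ρ) / (1 + z₁))
          else Real.exp ((1/γSB - (1/z₁ + 1) * (θ/ρ - z₁ * z₂ * hstar))
            - (1 + z₂ + z₁ * z₂) * x) * (z₁ / (1 + z₁)))) (Set.Ioc 0 hstar) := by
      refine (MeasureTheory.integrableOn_congr_fun (fun x hx => ?_) measurableSet_Ioc).mpr
        (((expInt_integrable 0 1 0 one_pos).mono_set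
          Set.Ioc_subset_Ioi_self).mul_const (1 - Real.exp (-θ/ρ) / (1 + z₁)))
      rw [if_pos hx.2]
    have int2 : MeasureTheory.IntegrableOn
        (fun x => (if x ≤ hstar then Real.exp (0 - 1 * x) * (1 - Real.exp (-θ/ρ) / (1 + z₁))
          else Real.exp ((1/γSB - (1/z₁ + 1) * (θ/ρ - z₁ * z₂ * hstar))
            - (1 + z₂ + z₁ * z₂) * x) * (z₁ / (1 + z₁)))) (Set.Ioi hstar) := by
      refine (MeasureTheory.integrableOn_congr_fun (fun x hx => ?_) measurableSet_Ioi).mpr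
        ((expInt_integrable hstar (1 + z₂ + z₁ * z₂) (1/γSB - (1/z₁ + 1) * (θ/ρ - z₁ * z₂ * hstar)) hB0).mul_const (z₁ / (1 + z₁)))
      rw [if_neg (not_le.mpr hx)]
    rw [splitIoi _ 0 hstar hh0.le int1 int2,
      MeasureTheory.setIntegral_congr_fun measurableSet_Ioc
        (fun x (hx : x ∈ Set.Ioc 0 hstar) => if_pos hx.2),
      MeasureTheory.setIntegral_congr_fun measurableSet_Ioi
        (fun x (hx : x ∈ Set.Ioi hstar) => if_neg (not_le.mpr hx)),
      MeasureTheory.integral_mul_const, MeasureTheory.integral_mul_const,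
      expIntIoc 0 hstar 1 0 hh0.le one_pos, expInt hstar (1 + z₂ + z₁ * z₂) _ hB0]
    have eh : Real.exp (0 - 1 * hstar) = lam ^ (1/z₂) * Real.exp (1/γUD) := by
      rw [hpow2, ← Real.exp_add, Real.exp_eq_exp, hhstar, hz₂]
      field_simp
      ring
    have eD : Real.exp ((1/γSB - (1/z₁ + 1) * (θ/ρ - z₁ * z₂ * hstar))
        - (1 + z₂ + z₁ * z₂) * hstar)
        = lam ^ (1/z₂) * Real.exp (1/γUD) * Real.exp (-θ/ρ) := by
      rw [hpow2, ← Real.exp_add, ← Real.exp_add, Real.exp_eq_exp, hhstar, hz₁, hz₂]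
      field_simp
      ring
    rw [eh, eD, show ((0:ℝ) - 1 * 0) = 0 by ring, Real.exp_zero]
    have h1z₁ne : (1 + z₁) ≠ 0 := ne_of_gt h1z₁
    have hBne : (1 + z₂ + z₁ * z₂) ≠ 0 := ne_of_gt hB0
    generalize Real.exp (1/γUD) = E2
    generalize Real.exp (-θ/ρ) = E3
    generalize lam ^ (1/z₂) = P
    field_simp
  rw [hNum, hDen, hN₃, hN₄]
  congr 1
  have h1z₁ne : (1 + z₁) ≠ 0 := ne_of_gt h1z₁
  have hBne : (1 + z₂ + z₁ * z₂) ≠ 0 := ne_of_gt hB0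
  generalize Real.exp (1/γUD) = E2
  generalize Real.exp (-θ/ρ) = E3
  generalize lam ^ (1/z₂) = P
  field_simp
  ring
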